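/- arXiv:math/0606318 — 3 statements merged into one kernel-verified Lean document; each statement's English description precedes it below -/
import Mathlib

section
/- Let C be an additive category and let φ : b₁ → b₂ be an isomorphism in C. Given objects C₀, D, E, F of C and morphisms α : C₀ → b₁, β : C₀ → D, δ : D → b₂, γ : b₁ → E, ε : D → E, μ : b₂ → F, ν : E → F such that the composites form a complex (i.e., φ∘α + δ∘β = 0 (as the b₂-component), γ∘α + ε∘β = 0, μ∘φ + ν∘γ = 0, μ∘δ + ν∘ε = 0), then the four-term complex segment C₀ → b₁⊕D → b₂⊕E → F with differentials (α,β), [[φ,δ],[γ,ε]], (μ,ν) is isomorphic as a complex segment to the complex C₀ → b₁⊕D → b₂⊕E → F with differentials (0,β), [[φ,0],[0, ε − γ∘φ⁻¹∘δ]], (0,ν). -/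
open CategoryTheory Limits

/-- Gaussian elimination (Bar-Natan), first part: the four-term complex segment
`C₀ → b₁⊞D → b₂⊞E → F` with differentials `(α,β)`, `[[φ,δ],[γ,ε]]`, `(μ,ν)` is
isomorphic (via isomorphisms of the middle terms, identity on the ends) to the
segment with differentials `(0,β)`, `[[φ,0],[0,ε−γφ⁻¹δ]]`, `(0,ν)`. -/
theorem gaussian_elimination_change_of_basis
    {C : Type*} [Category C] [Preadditive C] [HasBinaryBiproducts C]
    (C₀ b₁ b₂ D E F : C) (φ : b₁ ≅ b₂)
    (α : C₀ ⟶ b₁) (β : C₀ ⟶ D) (δ : D ⟶ b₂) (γ : b₁ ⟶ E) (ε : D ⟶ E)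
    (μ : b₂ ⟶ F) (ν : E ⟶ F)
    (h₁ : α ≫ φ.hom + β ≫ δ = 0)
    (h₂ : α ≫ γ + β ≫ ε = 0)
    (h₃ : φ.hom ≫ μ + γ ≫ ν = 0)
    (h₄ : δ ≫ μ + ε ≫ ν = 0) :
    ∃ (i₁ : b₁ ⊞ D ≅ b₁ ⊞ D) (i₂ : b₂ ⊞ E ≅ b₂ ⊞ E),
      biprod.lift α β ≫ i₁.hom = biprod.lift 0 β ∧
      i₁.hom ≫ biprod.desc (biprod.lift φ.hom 0) (biprod.lift 0 (ε - δ ≫ φ.inv ≫ γ)) =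
        biprod.desc (biprod.lift φ.hom γ) (biprod.lift δ ε) ≫ i₂.hom ∧
      i₂.hom ≫ biprod.desc 0 ν = biprod.desc μ ν := by
  refine ⟨⟨biprod.desc (biprod.lift (𝟙 b₁) 0) (biprod.lift (δ ≫ φ.inv) (𝟙 D)),
          biprod.desc (biprod.lift (𝟙 b₁) 0) (biprod.lift (-(δ ≫ φ.inv)) (𝟙 D)), ?_, ?_⟩,
         ⟨biprod.desc (biprod.lift (𝟙 b₂) (-(φ.inv ≫ γ))) (biprod.lift 0 (𝟙 E)),
          biprod.desc (biprod.lift (𝟙 b₂) (φ.inv ≫ γ)) (biprod.lift 0 (𝟙 E)), ?_, ?_⟩,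
         ?_, ?_, ?_⟩
  · ext <;> simp
  · ext <;> simp
  · ext <;> simp
  · ext <;> simp
  · have h : α + β ≫ δ ≫ φ.inv = 0 := by
      have := congrArg (· ≫ φ.inv) h₁
      simpa [Preadditive.add_comp, Category.assoc] using this
    have this : α = -(β ≫ δ ≫ φ.inv) := by linear_combination (norm := abel) h
    ext <;> simp [this]
  · ext <;> simp [Preadditive.comp_add, Preadditive.add_comp, Preadditive.comp_sub,
      Preadditive.sub_comp, Category.assoc] <;> abel
  · ext
    · have : γ ≫ ν = -(φ.hom ≫ μ) := by linear_combination (norm := abel) h₃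
      simp [Preadditive.comp_add, this]
    · simp
end

section
/- Let C be an additive category, and suppose a chain complex X in C decomposes as a direct sum X ≅ Y ⊕ Z of complexes, where Z is the two-term complex 0 → b₁ →^φ b₂ → 0 with φ an isomorphism. Then X is homotopy equivalent to Y. -/
open CategoryTheory Limits

/-- If a chain complex `X` decomposes as a direct sum `X ≅ Y ⊞ Z` where `Z` is the
two-term complex `0 → b₁ →φ b₂ → 0` with `φ` an isomorphism, then `X` is homotopy
equivalent to `Y`. -/
theorem drop_contractible_summand
    {C : Type*} [Category C] [Preadditive C] [HasBinaryBiproducts C] [HasZeroObject C]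
    (X Y Z : ChainComplex C ℤ) (n₀ : ℤ)
    (hZ : ∀ n, n ≠ n₀ → n ≠ n₀ + 1 → IsZero (Z.X n))
    (hφ : IsIso (Z.d (n₀ + 1) n₀))
    (e : X ≅ Y ⊞ Z) :
    Nonempty (HomotopyEquiv X Y) := by
  -- the contracting homotopy for `Z`
  let hom : ∀ i j : ℤ, Z.X i ⟶ Z.X j := fun i j =>
    if h : i = n₀ ∧ j = n₀ + 1 then
      eqToHom (congrArg Z.X h.1) ≫ inv (Z.d (n₀ + 1) n₀) ≫ eqToHom (congrArg Z.X h.2.symm)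
    else 0
  have hZid : Homotopy (𝟙 Z) (0 : Z ⟶ Z) := by
    refine ⟨hom, ?_, ?_⟩
    · intro i j hij
      dsimp only [hom]
      rw [dif_neg]
      rintro ⟨rfl, rfl⟩
      exact hij rfl
    · intro i
      by_cases h1 : i = n₀
      · rw [h1]
        rw [dNext_eq hom (show (ComplexShape.down ℤ).Rel n₀ (n₀ - 1) by simp),
          prevD_eq hom (show (ComplexShape.down ℤ).Rel (n₀ + 1) n₀ by simp)]
        have h2 : hom (n₀ - 1) n₀ = 0 := by
          dsimp only [hom]; rw [dif_neg]; rintro ⟨h, -⟩; omega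
        have h3 : hom n₀ (n₀ + 1) =
            inv (Z.d (n₀ + 1) n₀) := by
          dsimp only [hom]; rw [dif_pos ⟨rfl, rfl⟩]; simp
        simp [h2, h3]
      · by_cases h2 : i = n₀ + 1
        · rw [h2]
          rw [dNext_eq hom (show (ComplexShape.down ℤ).Rel (n₀+1) n₀ by simp),
            prevD_eq hom (show (ComplexShape.down ℤ).Rel (n₀+1+1) (n₀+1) by simp)]
          have h3 : hom n₀ (n₀ + 1) = inv (Z.d (n₀ + 1) n₀) := by
            dsimp only [hom]; rw [dif_pos ⟨rfl, rfl⟩]; simp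
          have h4 : hom (n₀ + 1) (n₀ + 1 + 1) = 0 := by
            dsimp only [hom]; rw [dif_neg]; rintro ⟨h, -⟩; omega
          simp [h3, h4]
        · exact (hZ i h1 h2).eq_of_src _ _
  -- pass to the homotopy category
  let Q := HomotopyCategory.quotient C (ComplexShape.down ℤ)
  have hzero : Q.map (e.hom ≫ (biprod.snd ≫ biprod.inr) ≫ e.inv) = 0 := by
    have h : Homotopy (e.hom ≫ (biprod.snd ≫ biprod.inr) ≫ e.inv) (0 : X ⟶ X) := by
      refine (Homotopy.ofEq ?_).trans
        (((hZid.compLeft (e.hom ≫ biprod.snd)).compRight (biprod.inr ≫ e.inv)).trans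
          (Homotopy.ofEq (by simp)))
      simp
    rw [HomotopyCategory.eq_of_homotopy _ _ h, Functor.map_zero]
  have iso : Q.obj X ≅ Q.obj Y := by
    refine ⟨Q.map (e.hom ≫ biprod.fst), Q.map (biprod.inl ≫ e.inv), ?_, ?_⟩
    · rw [← Q.map_comp]
      have key : (e.hom ≫ biprod.fst) ≫ biprod.inl ≫ e.inv =
          𝟙 X - e.hom ≫ (biprod.snd ≫ biprod.inr) ≫ e.inv := by
        have h5 : (biprod.fst ≫ biprod.inl : Y ⊞ Z ⟶ Y ⊞ Z) =
            𝟙 (Y ⊞ Z) - biprod.snd ≫ biprod.inr := by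
          rw [eq_sub_iff_add_eq]; exact biprod.total
        rw [Category.assoc, ← Category.assoc biprod.fst, h5]
        simp [Preadditive.sub_comp, Preadditive.comp_sub]
      rw [key, Functor.map_sub, hzero, sub_zero, Q.map_id]
    · rw [← Q.map_comp]
      have key : (biprod.inl ≫ e.inv) ≫ e.hom ≫ biprod.fst = 𝟙 Y := by simp
      rw [key, Q.map_id]
  exact ⟨HomotopyCategory.homotopyEquivOfIso iso⟩
end

section
/- Let C₀ → b₁⊕D → b₂⊕E → F be a complex segment in an additive category with differentials (α,β), [[φ,δ],[γ,ε]], (μ,ν), where φ : b₁ → b₂ is an isomorphism. Then this complex segment is homotopy equivalent to the complex segment C₀ → D → E → F with differentials β, ε − γ∘φ⁻¹∘δ, ν. In particular the two segments have isomorphic homology at each of the four positions (when C is abelian). -/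
open CategoryTheory Limits

/-- Bar-Natan's Gaussian elimination: the four-term complex segment
`C₀ → b₁⊞D → b₂⊞E → F` (extended by zero) with differentials `(α,β)`,
`[[φ,δ],[γ,ε]]`, `(μ,ν)`, where `φ` is an isomorphism, is homotopy equivalent to
the segment `C₀ → D → E → F` with differentials `β`, `ε − γ∘φ⁻¹∘δ`, `ν`;
in particular the two have isomorphic homology at each position. -/
theorem gaussian_elimination_homotopy_equiv
    {C : Type*} [Category C] [Abelian C]
    (C₀ b₁ b₂ D E F : C) (φ : b₁ ≅ b₂)
    (α : C₀ ⟶ b₁) (β : C₀ ⟶ D) (δ : D ⟶ b₂) (γ : b₁ ⟶ E) (ε : D ⟶ E)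
    (μ : b₂ ⟶ F) (ν : E ⟶ F)
    (X X' : CochainComplex C ℕ)
    (e₀ : X.X 0 ≅ C₀) (e₁ : X.X 1 ≅ b₁ ⊞ D) (e₂ : X.X 2 ≅ b₂ ⊞ E) (e₃ : X.X 3 ≅ F)
    (hX : ∀ n, 3 < n → IsZero (X.X n))
    (hd₀ : X.d 0 1 = e₀.hom ≫ biprod.lift α β ≫ e₁.inv)
    (hd₁ : X.d 1 2 =
      e₁.hom ≫ biprod.desc (biprod.lift φ.hom γ) (biprod.lift δ ε) ≫ e₂.inv)
    (hd₂ : X.d 2 3 = e₂.hom ≫ biprod.desc μ ν ≫ e₃.inv)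
    (f₀ : X'.X 0 ≅ C₀) (f₁ : X'.X 1 ≅ D) (f₂ : X'.X 2 ≅ E) (f₃ : X'.X 3 ≅ F)
    (hX' : ∀ n, 3 < n → IsZero (X'.X n))
    (hd'₀ : X'.d 0 1 = f₀.hom ≫ β ≫ f₁.inv)
    (hd'₁ : X'.d 1 2 = f₁.hom ≫ (ε - δ ≫ φ.inv ≫ γ) ≫ f₂.inv)
    (hd'₂ : X'.d 2 3 = f₂.hom ≫ ν ≫ f₃.inv) :
    Nonempty (HomotopyEquiv X X') ∧ ∀ n, Nonempty (X.homology n ≅ X'.homology n) := by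
  -- relations coming from `d ≫ d = 0`
  have r1 : α ≫ φ.hom + β ≫ δ = 0 := by
    have h := X.d_comp_d 0 1 2
    rw [hd₀, hd₁] at h
    have h' := e₀.inv ≫= ((h =≫ e₂.hom) =≫ biprod.fst)
    simpa [Preadditive.add_comp] using h'
  have r3 : φ.hom ≫ μ + γ ≫ ν = 0 := by
    have h := X.d_comp_d 1 2 3
    rw [hd₁, hd₂] at h
    have h' := (e₁.inv ≫= (h =≫ e₃.hom))
    have h'' := biprod.inl ≫= h'
    simpa [Preadditive.add_comp] using h''
  have rgn : γ ≫ ν = -(φ.hom ≫ μ) := eq_neg_of_add_eq_zero_right r3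
  have rbd : β ≫ δ ≫ φ.inv = -α := by
    have := r1 =≫ φ.inv
    simp only [Preadditive.add_comp, Category.assoc, Iso.hom_inv_id,
      Category.comp_id, zero_comp] at this
    rw [← Category.assoc]
    exact eq_neg_of_add_eq_zero_right (by rw [Category.assoc]; exact this)
  have he : Nonempty (HomotopyEquiv X X') := by
    refine ⟨⟨⟨fun n => match n with
        | 0 => e₀.hom ≫ f₀.inv
        | 1 => e₁.hom ≫ biprod.snd ≫ f₁.inv
        | 2 => e₂.hom ≫ biprod.desc (-(φ.inv ≫ γ)) (𝟙 E) ≫ f₂.inv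
        | 3 => e₃.hom ≫ f₃.inv
        | _ => 0, ?_⟩,
      ⟨fun n => match n with
        | 0 => f₀.hom ≫ e₀.inv
        | 1 => f₁.hom ≫ biprod.lift (-(δ ≫ φ.inv)) (𝟙 D) ≫ e₁.inv
        | 2 => f₂.hom ≫ biprod.inr ≫ e₂.inv
        | 3 => f₃.hom ≫ e₃.inv
        | _ => 0, ?_⟩,
      ⟨fun i j => match i, j with
        | 2, 1 => -(e₂.hom ≫ biprod.fst ≫ φ.inv ≫ biprod.inl ≫ e₁.inv)
        | _, _ => 0, ?_, ?_⟩,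
      Homotopy.ofEq ?_⟩⟩
    · -- comm' for F
      rintro i j (rfl : i + 1 = j)
      match i with
      | 0 => rw [hd₀, hd'₀]; simp
      | 1 =>
        rw [hd₁, hd'₁]
        simp only [Category.assoc, Iso.inv_hom_id_assoc]
        rw [cancel_epi e₁.hom]
        ext
        · simp
        · simp only [biprod.inr_snd_assoc, biprod.inr_desc_assoc, biprod.lift_desc_assoc,
            Preadditive.sub_comp, Preadditive.add_comp, Preadditive.neg_comp,
            Preadditive.comp_neg, Category.assoc, Category.id_comp]
          abel
      | 2 =>
        rw [hd₂, hd'₂]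
        simp only [Category.assoc, Iso.inv_hom_id_assoc]
        rw [cancel_epi e₂.hom]
        ext
        · simp [reassoc_of% rgn]
        · simp
      | (n+3) => exact (hX' (n + 4) (by omega)).eq_of_tgt _ _
    · -- comm' for G
      rintro i j (rfl : i + 1 = j)
      match i with
      | 0 =>
        rw [hd₀, hd'₀]
        simp only [Category.assoc, Iso.inv_hom_id_assoc]
        rw [cancel_epi f₀.hom]
        simp only [← Category.assoc]
        rw [cancel_mono e₁.inv]
        ext
        · simp [rbd]
        · simp
      | 1 =>
        rw [hd₁, hd'₁]
        simp only [Category.assoc, Iso.inv_hom_id_assoc]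
        rw [cancel_epi f₁.hom]
        simp only [← Category.assoc]
        rw [cancel_mono e₂.inv]
        ext <;> simp [Preadditive.sub_comp, Preadditive.comp_sub]
        all_goals abel
      | 2 =>
        rw [hd₂, hd'₂]
        simp
      | (n+3) => exact (hX (n + 4) (by omega)).eq_of_tgt _ _
    · -- zero field of the homotopy
      rintro i j h
      match i, j with
      | 2, 1 => exact absurd rfl h
      | 0, _ => rfl
      | 1, _ => rfl
      | 2, 0 => rfl
      | 2, 2 => rfl
      | 2, (n+3) => rfl
      | (n+3), _ => rfl
    · -- comm field of the homotopy
      intro i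
      match i with
      | 0 =>
        rw [dNext_eq _ (show (ComplexShape.up ℕ).Rel 0 1 from rfl),
          prevD_eq_zero _ 0 (by rw [CochainComplex.prev_nat_zero]; simp)]
        dsimp only [HomologicalComplex.comp_f, HomologicalComplex.id_f]
        simp
      | 1 =>
        rw [dNext_eq _ (show (ComplexShape.up ℕ).Rel 1 2 from rfl),
          prevD_eq _ (show (ComplexShape.up ℕ).Rel 0 1 from rfl)]
        dsimp only [HomologicalComplex.comp_f, HomologicalComplex.id_f]
        simp only [hd₁]
        simp only [Category.assoc, Iso.inv_hom_id_assoc, Preadditive.comp_neg,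
          Preadditive.neg_comp, comp_zero, add_zero, zero_comp]
        have key : (biprod.snd ≫ biprod.lift (-(δ ≫ φ.inv)) (𝟙 D) : b₁ ⊞ D ⟶ b₁ ⊞ D) =
            -(biprod.desc (biprod.lift φ.hom γ) (biprod.lift δ ε) ≫
              biprod.fst ≫ φ.inv ≫ biprod.inl) + 𝟙 _ := by
          ext <;> simp
        rw [reassoc_of% key]
        simp [Preadditive.add_comp, Preadditive.neg_comp,
          Preadditive.comp_add, Preadditive.comp_neg]
      | 2 =>
        rw [dNext_eq _ (show (ComplexShape.up ℕ).Rel 2 3 from rfl),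
          prevD_eq _ (show (ComplexShape.up ℕ).Rel 1 2 from rfl)]
        dsimp only [HomologicalComplex.comp_f, HomologicalComplex.id_f]
        simp only [hd₁]
        simp only [Category.assoc, Iso.inv_hom_id_assoc, Preadditive.comp_neg,
          Preadditive.neg_comp, comp_zero, zero_add, zero_comp]
        have key : (biprod.desc (-(φ.inv ≫ γ)) (𝟙 E) ≫ biprod.inr : b₂ ⊞ E ⟶ b₂ ⊞ E) =
            -(biprod.fst ≫ φ.inv ≫ biprod.inl ≫
              biprod.desc (biprod.lift φ.hom γ) (biprod.lift δ ε)) + 𝟙 _ := by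
          ext <;> simp
        rw [reassoc_of% key]
        simp [Preadditive.add_comp, Preadditive.neg_comp,
          Preadditive.comp_add, Preadditive.comp_neg]
      | 3 =>
        rw [dNext_eq _ (show (ComplexShape.up ℕ).Rel 3 4 from rfl),
          prevD_eq _ (show (ComplexShape.up ℕ).Rel 2 3 from rfl)]
        dsimp only [HomologicalComplex.comp_f, HomologicalComplex.id_f]
        simp
      | (n+4) => exact ((hX (n + 4) (by omega)).eq_of_src _ _)
    · -- G ≫ F = 𝟙
      ext n
      match n with
      | 0 => dsimp only [HomologicalComplex.comp_f]; simp
      | 1 => dsimp only [HomologicalComplex.comp_f]; simp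
      | 2 => dsimp only [HomologicalComplex.comp_f]; simp
      | 3 => dsimp only [HomologicalComplex.comp_f]; simp
      | (n+4) => exact ((hX' (n + 4) (by omega)).eq_of_src _ _)
  obtain ⟨e⟩ := he
  exact ⟨⟨e⟩, fun n => ⟨e.toHomologyIso n⟩⟩
end
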